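/- Let H be a Hilbert space and T ∈ B(H) with σ(T) ⊆ closed unit disk. Suppose there is C > 0 such that for all r > 1: (r²−1)∫₀^{2π}‖R(re^{it},T)x‖²dt ≤ C‖x‖² and (r²−1)∫₀^{2π}‖R(re^{it},T)*y‖²dt ≤ C‖y‖² for all x, y ∈ H. Then T satisfies (GFS)₁: ∫₀^{2π}|⟨R(re^{it},T)²x, y⟩|dt ≤ C/(r²−1) ‖x‖‖y‖ for all r > 1 and x, y ∈ H. -/

import Mathlib

open Complex MeasureTheory Metric ContinuousLinearMap
open scoped Real

lemma memLp_of_cont {f : ℝ → ℝ} (hf : Continuous f) (p : ENNReal) :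
    MemLp f p (volume.restrict (Set.Ioc (0:ℝ) (2*π))) := by
  have hfin : IsFiniteMeasure (volume.restrict (Set.Ioc (0:ℝ) (2*π))) :=
    ⟨by rw [Measure.restrict_apply_univ, Real.volume_Ioc]; exact ENNReal.ofReal_lt_top⟩
  obtain ⟨M, hM⟩ := isCompact_Icc.exists_bound_of_continuousOn
    (s := Set.Icc (0:ℝ) (2*π)) hf.continuousOn
  have hb : ∀ᵐ t ∂(volume.restrict (Set.Ioc (0:ℝ) (2*π))), ‖f t‖ ≤ M := by
    filter_upwards [ae_restrict_mem measurableSet_Ioc] with t ht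
    exact hM t (Set.Ioc_subset_Icc_self ht)
  exact (memLp_top_of_bound hf.aestronglyMeasurable M hb).mono_exponent le_top

theorem stmt11 {H : Type*} [NormedAddCommGroup H] [InnerProductSpace ℂ H] [CompleteSpace H]
    (T : H →L[ℂ] H) (hσ : spectrum ℂ T ⊆ closedBall 0 1)
    (C : ℝ) (hC : 0 < C)
    (h1 : ∀ r : ℝ, 1 < r → ∀ x : H,
      (r^2-1) * ∫ t in (0:ℝ)..(2*π), ‖resolvent T ((r : ℂ) * exp (t * I)) x‖^2 ≤ C * ‖x‖^2)
    (h2 : ∀ r : ℝ, 1 < r → ∀ y : H,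
      (r^2-1) * ∫ t in (0:ℝ)..(2*π),
        ‖adjoint (resolvent T ((r : ℂ) * exp (t * I))) y‖^2 ≤ C * ‖y‖^2) :
    ∀ r : ℝ, 1 < r → ∀ x y : H,
      ∫ t in (0:ℝ)..(2*π),
          ‖(inner ℂ ((resolvent T ((r : ℂ) * exp (t * I)) ^ 2) x) y : ℂ)‖
        ≤ C / (r^2-1) * ‖x‖ * ‖y‖ := by
  intro r hr x y
  have hrd : (0:ℝ) < r^2 - 1 := by nlinarith
  have hπ : (0:ℝ) ≤ 2*π := by positivity
  -- continuity of the resolvent path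
  have hcρ : ∀ t : ℝ, (r : ℂ) * exp (t * I) ∈ resolventSet ℂ T := by
    intro t
    have hn : ‖(r : ℂ) * exp (↑t * I)‖ = r := by
      simp [norm_exp_ofReal_mul_I, abs_of_pos (by linarith : (0:ℝ) < r)]
    have hnot : (r : ℂ) * exp (↑t * I) ∉ spectrum ℂ T := by
      intro h
      have := hσ h
      rw [mem_closedBall, dist_zero_right, hn] at this
      linarith
    simpa [spectrum, Set.mem_compl_iff, not_not] using hnot
  have hc : Continuous fun t : ℝ => (r : ℂ) * exp (↑t * I) := by fun_prop
  have hR : Continuous fun t : ℝ => resolvent T ((r : ℂ) * exp (t * I)) := by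
    rw [continuous_iff_continuousAt]
    intro t
    exact ContinuousAt.comp (g := resolvent T)
      (spectrum.hasDerivAt_resolvent (hcρ t)).continuousAt hc.continuousAt
  -- the two L² functions
  set f : ℝ → ℝ := fun t => ‖resolvent T ((r : ℂ) * exp (t * I)) x‖ with hfdef
  set g : ℝ → ℝ := fun t => ‖adjoint (resolvent T ((r : ℂ) * exp (t * I))) y‖ with hgdef
  have hf : Continuous f := ((ContinuousLinearMap.apply ℂ H x).continuous.comp hR).norm
  have hg : Continuous g :=
    ((ContinuousLinearMap.apply ℂ H y).continuous.comp
      ((ContinuousLinearMap.adjoint (E := H) (F := H)).continuous.comp hR)).norm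
  -- continuity of the integrand
  have hI : Continuous fun t : ℝ =>
      ‖(inner ℂ ((resolvent T ((r : ℂ) * exp (t * I)) ^ 2) x) y : ℂ)‖ := by
    have : Continuous fun t : ℝ => (resolvent T ((r : ℂ) * exp (t * I)) ^ 2) x :=
      (ContinuousLinearMap.apply ℂ H x).continuous.comp (hR.pow 2)
    exact (Continuous.inner this continuous_const).norm
  -- pointwise bound
  have hpt : ∀ t : ℝ,
      ‖(inner ℂ ((resolvent T ((r : ℂ) * exp (t * I)) ^ 2) x) y : ℂ)‖ ≤ f t * g t := by
    intro t
    set R := resolvent T ((r : ℂ) * exp (t * I))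
    have h1' : (R ^ 2) x = R (R x) := by rw [sq]; rfl
    have h2' : (inner ℂ ((R ^ 2) x) y : ℂ) = inner ℂ (R x) (adjoint R y) := by
      rw [h1', ContinuousLinearMap.adjoint_inner_right]
    rw [h2']
    exact norm_inner_le_norm _ _
  set μ := volume.restrict (Set.Ioc (0:ℝ) (2*π)) with hμ
  -- step 1: bound by ∫ f g
  have step1 : ∫ t in (0:ℝ)..(2*π),
        ‖(inner ℂ ((resolvent T ((r : ℂ) * exp (t * I)) ^ 2) x) y : ℂ)‖
      ≤ ∫ t, f t * g t ∂μ := by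
    rw [intervalIntegral.integral_of_le hπ]
    refine integral_mono ?_ ?_ hpt
    · exact memLp_one_iff_integrable.mp (memLp_of_cont hI 1)
    · exact memLp_one_iff_integrable.mp (memLp_of_cont (hf.mul hg) 1)
  -- step 2: Cauchy-Schwarz
  have hf2 : MemLp f (ENNReal.ofReal 2) μ := by
    rw [show ENNReal.ofReal 2 = 2 by norm_num]; exact memLp_of_cont hf 2
  have hg2 : MemLp g (ENNReal.ofReal 2) μ := by
    rw [show ENNReal.ofReal 2 = 2 by norm_num]; exact memLp_of_cont hg 2
  have step2 : ∫ t, f t * g t ∂μ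
      ≤ (∫ t, f t ^ (2:ℝ) ∂μ) ^ (1/(2:ℝ)) * (∫ t, g t ^ (2:ℝ) ∂μ) ^ (1/(2:ℝ)) := by
    refine integral_mul_le_Lp_mul_Lq_of_nonneg ⟨by norm_num, by norm_num, by norm_num⟩ ?_ ?_ hf2 hg2
    · exact Filter.Eventually.of_forall fun t => norm_nonneg _
    · exact Filter.Eventually.of_forall fun t => norm_nonneg _
  -- identify powers
  have hfp : ∫ t, f t ^ (2:ℝ) ∂μ = ∫ t in (0:ℝ)..(2*π), f t ^ 2 := by
    rw [intervalIntegral.integral_of_le hπ]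
    exact integral_congr_ae (Filter.Eventually.of_forall fun t => by
      show f t ^ (2:ℝ) = f t ^ (2:ℕ)
      rw [← Real.rpow_natCast (f t) 2]; norm_num)
  have hgp : ∫ t, g t ^ (2:ℝ) ∂μ = ∫ t in (0:ℝ)..(2*π), g t ^ 2 := by
    rw [intervalIntegral.integral_of_le hπ]
    exact integral_congr_ae (Filter.Eventually.of_forall fun t => by
      show g t ^ (2:ℝ) = g t ^ (2:ℕ)
      rw [← Real.rpow_natCast (g t) 2]; norm_num)
  -- the quantitative bounds
  have hA : ∫ t in (0:ℝ)..(2*π), f t ^ 2 ≤ C * ‖x‖^2 / (r^2-1) := by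
    rw [le_div_iff₀ hrd, mul_comm]; exact h1 r hr x
  have hB : ∫ t in (0:ℝ)..(2*π), g t ^ 2 ≤ C * ‖y‖^2 / (r^2-1) := by
    rw [le_div_iff₀ hrd, mul_comm]; exact h2 r hr y
  have hAnn : (0:ℝ) ≤ ∫ t in (0:ℝ)..(2*π), f t ^ 2 := by
    rw [intervalIntegral.integral_of_le hπ]
    exact integral_nonneg fun t => sq_nonneg _
  have hBnn : (0:ℝ) ≤ ∫ t in (0:ℝ)..(2*π), g t ^ 2 := by
    rw [intervalIntegral.integral_of_le hπ]
    exact integral_nonneg fun t => sq_nonneg _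
  have key : (∫ t in (0:ℝ)..(2*π), f t ^ 2) ^ (1/(2:ℝ))
      * (∫ t in (0:ℝ)..(2*π), g t ^ 2) ^ (1/(2:ℝ)) ≤ C / (r^2-1) * ‖x‖ * ‖y‖ := by
    have e1 : (∫ t in (0:ℝ)..(2*π), f t ^ 2) ^ (1/(2:ℝ))
        ≤ (C * ‖x‖^2 / (r^2-1)) ^ (1/(2:ℝ)) :=
      Real.rpow_le_rpow hAnn hA (by norm_num)
    have e2 : (∫ t in (0:ℝ)..(2*π), g t ^ 2) ^ (1/(2:ℝ))
        ≤ (C * ‖y‖^2 / (r^2-1)) ^ (1/(2:ℝ)) :=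
      Real.rpow_le_rpow hBnn hB (by norm_num)
    calc (∫ t in (0:ℝ)..(2*π), f t ^ 2) ^ (1/(2:ℝ))
          * (∫ t in (0:ℝ)..(2*π), g t ^ 2) ^ (1/(2:ℝ))
        ≤ (C * ‖x‖^2 / (r^2-1)) ^ (1/(2:ℝ)) * (C * ‖y‖^2 / (r^2-1)) ^ (1/(2:ℝ)) := by
          apply mul_le_mul e1 e2 (Real.rpow_nonneg hBnn _)
            (Real.rpow_nonneg (by positivity) _)
      _ = C / (r^2-1) * ‖x‖ * ‖y‖ := by
          rw [← Real.sqrt_eq_rpow, ← Real.sqrt_eq_rpow,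
            ← Real.sqrt_mul (by positivity)]
          rw [show C * ‖x‖^2 / (r^2-1) * (C * ‖y‖^2 / (r^2-1))
              = (C / (r^2-1) * ‖x‖ * ‖y‖)^2 by field_simp]
          exact Real.sqrt_sq (by positivity)
  calc ∫ t in (0:ℝ)..(2*π),
        ‖(inner ℂ ((resolvent T ((r : ℂ) * exp (t * I)) ^ 2) x) y : ℂ)‖
      ≤ ∫ t, f t * g t ∂μ := step1
    _ ≤ (∫ t, f t ^ (2:ℝ) ∂μ) ^ (1/(2:ℝ)) * (∫ t, g t ^ (2:ℝ) ∂μ) ^ (1/(2:ℝ)) := step2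
    _ ≤ C / (r^2-1) * ‖x‖ * ‖y‖ := by rw [hfp, hgp]; exact key
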